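/- arXiv:1911.11053 — 7 statements merged into one kernel-verified Lean document; each statement's English description precedes it below -/
import Mathlib

section
/- For every n ≥ 4 and every h with 2 ≤ h ≤ n−1, there exists an add-MARA instance with n agents and n objects and an allocation π that is ((h+1)-app envy)-free but not (h-app envy)-free. In particular, (K-app envy)-freeness of an allocation does not imply ((K−1)-app envy)-freeness for K ≥ 3. -/
open Finset

/-- Utility that agent `i` assigns to the bundle held by agent `k` under
allocation `π` (an allocation maps each object to the agent receiving it). -/
def bundleUtil {n m : ℕ} (u : Fin n → Fin m → ℚ) (π : Fin m → Fin n)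
    (i k : Fin n) : ℚ :=
  ∑ o ∈ Finset.univ.filter (fun o => π o = k), u i o

/-- Agent `i` `K`-app envies agent `j` in `π`: there is a set of `K` agents
including `i`, each of whom values `j`'s bundle strictly more than `i`'s. -/
def KAppEnvies {n m : ℕ} (u : Fin n → Fin m → ℚ) (π : Fin m → Fin n)
    (K : ℕ) (i j : Fin n) : Prop :=
  ∃ S : Finset (Fin n), S.card = K ∧ i ∈ S ∧
    ∀ k ∈ S, bundleUtil u π k i < bundleUtil u π k j

/-- An allocation is (`K`-app envy)-free if no agent `K`-app envies another. -/
def KAppEnvyFree {n m : ℕ} (u : Fin n → Fin m → ℚ) (π : Fin m → Fin n)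
    (K : ℕ) : Prop :=
  ∀ i j : Fin n, i ≠ j → ¬ KAppEnvies u π K i j

lemma bundleUtil_id {n : ℕ} (u : Fin n → Fin n → ℚ) (i k : Fin n) :
    bundleUtil u id i k = u i k := by
  unfold bundleUtil
  have : Finset.univ.filter (fun o : Fin n => id o = k) = {k} := by
    ext o; simp [eq_comm]
  rw [this, Finset.sum_singleton]

theorem hplus1_free_not_h_free (n h : ℕ) (hn : 4 ≤ n) (hh : 2 ≤ h) (hhn : h ≤ n - 1) :
    ∃ (u : Fin n → Fin n → ℚ) (π : Fin n → Fin n),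
      (∀ i j, 0 ≤ u i j) ∧
      KAppEnvyFree u π (h + 1) ∧ ¬ KAppEnvyFree u π h := by
  have hn0 : 0 < n := by omega
  have hhn' : h < n := by omega
  refine ⟨fun k o => if k.val < h ∧ o.val = 1 then 1 else 0, id, ?_, ?_, ?_⟩
  · intro i j; dsimp; split <;> norm_num
  · intro i j hij ⟨S, hcard, hiS, hS⟩
    have hsub : S ⊆ Finset.univ.filter (fun k : Fin n => k.val < h) := by
      intro k hk
      have := hS k hk
      rw [bundleUtil_id, bundleUtil_id] at this
      simp only [Finset.mem_filter, Finset.mem_univ, true_and]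
      by_contra hkh
      revert this
      simp [hkh]
    have hle := Finset.card_le_card hsub
    have hcf : (Finset.univ.filter (fun k : Fin n => k.val < h)).card = h := by
      have : Finset.univ.filter (fun k : Fin n => k.val < h) = Finset.Iio (⟨h, hhn'⟩ : Fin n) := by
        ext k; simp [Fin.lt_def]
      rw [this, Fin.card_Iio]
    omega
  · intro hfree
    have h1n : 1 < n := by omega
    apply hfree ⟨0, hn0⟩ ⟨1, h1n⟩ (by simp [Fin.ext_iff])
    refine ⟨Finset.univ.filter (fun k : Fin n => k.val < h), ?_, ?_, ?_⟩
    · have : Finset.univ.filter (fun k : Fin n => k.val < h) = Finset.Iio (⟨h, hhn'⟩ : Fin n) := by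
        ext k; simp [Fin.lt_def]
      rw [this, Fin.card_Iio]
    · simp; omega
    · intro k hk
      simp only [Finset.mem_filter, Finset.mem_univ, true_and] at hk
      rw [bundleUtil_id, bundleUtil_id]
      simp [hk]
end

section
/- There exists an add-MARA instance in which every agent assigns utilities such that one object o_1 satisfies u(i,1) > Σ_{k≥2} u(i,k) for all agents a_i, and in any such instance, every complete allocation exhibits unanimous envy: for any allocation, some agent n-app envies the agent holding o_1. Hence the instance is not (K-app envy)-free for any K. -/
open Finset

theorem unanimous_envy_instance :
    (∃ (n m : ℕ) (hn : 2 ≤ n) (hm : 1 ≤ m) (u : Fin n → Fin m → ℚ),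
        (∀ i j, 0 ≤ u i j) ∧
        (∀ i : Fin n,
          (∑ k ∈ Finset.univ.filter (fun k => k ≠ (⟨0, hm⟩ : Fin m)), u i k)
            < u i ⟨0, hm⟩)) ∧
    (∀ (n m : ℕ) (hn : 2 ≤ n) (hm : 1 ≤ m) (u : Fin n → Fin m → ℚ),
        (∀ i j, 0 ≤ u i j) →
        (∀ i : Fin n,
          (∑ k ∈ Finset.univ.filter (fun k => k ≠ (⟨0, hm⟩ : Fin m)), u i k)
            < u i ⟨0, hm⟩) →
        ∀ π : Fin m → Fin n,
          (∃ i : Fin n, i ≠ π ⟨0, hm⟩ ∧ KAppEnvies u π n i (π ⟨0, hm⟩)) ∧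
          ∀ K : ℕ, 1 ≤ K → K ≤ n → ¬ KAppEnvyFree u π K) := by
  constructor
  · refine ⟨2, 1, le_refl 2, le_refl 1, fun _ _ => 1, fun _ _ => zero_le_one, fun i => ?_⟩
    have h : ∀ (h1 : 0 < 1),
        (Finset.univ.filter (fun k : Fin 1 => k ≠ (⟨0, h1⟩ : Fin 1))) = ∅ :=
      fun h1 => Finset.filter_eq_empty_iff.mpr
        (fun k _ => not_not.mpr (Subsingleton.elim k _))
    rw [h]; norm_num
  · intro n m hn hm u hnn hbig π
    set o1 : Fin m := ⟨0, hm⟩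
    set j : Fin n := π o1 with hj
    -- key: every agent k strictly prefers j's bundle to any i ≠ j's bundle
    have key : ∀ i : Fin n, i ≠ j → ∀ k : Fin n,
        bundleUtil u π k i < bundleUtil u π k j := by
      intro i hij k
      have h1 : bundleUtil u π k i ≤
          ∑ o ∈ Finset.univ.filter (fun o => o ≠ o1), u k o := by
        apply Finset.sum_le_sum_of_subset_of_nonneg
        · intro o ho
          simp only [Finset.mem_filter, Finset.mem_univ, true_and] at ho ⊢
          intro h; rw [h] at ho; exact hij ho.symm
        · intro o _ _; exact hnn k o
      have h2 : u k o1 ≤ bundleUtil u π k j := by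
        apply Finset.single_le_sum (fun o _ => hnn k o)
        simp [hj]
      exact h1.trans_lt ((hbig k).trans_le h2)
    haveI : Nontrivial (Fin n) := Fin.nontrivial_iff_two_le.mpr hn
    obtain ⟨i, hij⟩ := exists_ne j
    constructor
    · exact ⟨i, hij, Finset.univ, by simp, Finset.mem_univ i,
        fun k _ => key i hij k⟩
    · intro K hK1 hKn hfree
      obtain ⟨S, hiS, hScard⟩ := Finset.exists_superset_card_eq
        (s := ({i} : Finset (Fin n))) (by simpa using hK1) (by simpa using hKn)
      exact hfree i j hij ⟨S, hScard, hiS (Finset.mem_singleton_self i),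
        fun k _ => key i hij k⟩
end

section
/- Let π be an allocation and π' be obtained from π by a weakly improving reallocation cycle (each agent in the cycle weakly prefers her new bundle, at least one strictly). Then the degree of envy strictly decreases: de(π') < de(π). -/
open Finset

/-- Degree of envy of the society. -/
def degEnvy {n m : ℕ} (u : Fin n → Fin m → ℚ) (π : Fin m → Fin n) : ℚ :=
  ∑ i : Fin n, ∑ j : Fin n, max 0 (bundleUtil u π i j - bundleUtil u π i i)

/-- A weakly improving reallocation cycle (given by the cyclic permutation σ,
agent i receives the former bundle of agent σ i) strictly decreases the degree
of envy. -/
theorem weakly_improving_cycle_decreases_degEnvy {n m : ℕ}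
    (u : Fin n → Fin m → ℚ) (π : Fin m → Fin n) (σ : Equiv.Perm (Fin n))
    (hcyc : σ.IsCycle)
    (hweak : ∀ i : Fin n, bundleUtil u π i i ≤ bundleUtil u π i (σ i))
    (hstrict : ∃ i : Fin n, bundleUtil u π i i < bundleUtil u π i (σ i)) :
    degEnvy u (fun o => σ.symm (π o)) < degEnvy u π := by
  have hB : ∀ i k : Fin n,
      bundleUtil u (fun o => σ.symm (π o)) i k = bundleUtil u π i (σ k) := by
    intro i k
    unfold bundleUtil
    apply Finset.sum_congr _ (fun _ _ => rfl)
    ext o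
    simp [Equiv.symm_apply_eq]
  obtain ⟨i0, hi0⟩ := hstrict
  unfold degEnvy
  simp only [hB]
  have hinner : ∀ i : Fin n,
      (∑ j : Fin n, max 0 (bundleUtil u π i (σ j) - bundleUtil u π i (σ i)))
        = ∑ j : Fin n, max 0 (bundleUtil u π i j - bundleUtil u π i (σ i)) := by
    intro i
    exact Fintype.sum_equiv σ _ _ (fun j => rfl)
  simp only [hinner]
  apply Finset.sum_lt_sum
  · intro i _
    apply Finset.sum_le_sum
    intro j _
    exact max_le_max le_rfl (by linarith [hweak i])
  · refine ⟨i0, Finset.mem_univ _, ?_⟩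
    apply Finset.sum_lt_sum
    · intro j _
      exact max_le_max le_rfl (by linarith [hweak i0])
    · refine ⟨σ i0, Finset.mem_univ _, ?_⟩
      have h1 : max 0 (bundleUtil u π i0 (σ i0) - bundleUtil u π i0 (σ i0)) = 0 := by
        simp
      rw [h1]
      exact lt_max_of_lt_right (by linarith)
end

section
/- If an add-MARA instance admits a (2-app envy)-free allocation, then it also admits an envy-free allocation. -/
open Finset

/-- Invariant: whenever `a` envies `b`, every other agent `l` weakly prefers
`a`'s bundle to `b`'s bundle. -/
def Psat {n m : ℕ} (u : Fin n → Fin m → ℚ) (π : Fin m → Fin n) : Prop :=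
  ∀ a b l : Fin n, bundleUtil u π a a < bundleUtil u π a b → l ≠ a →
    bundleUtil u π l b ≤ bundleUtil u π l a

/-- Set of agents who envy someone. -/
def unsat {n m : ℕ} (u : Fin n → Fin m → ℚ) (π : Fin m → Fin n) : Finset (Fin n) :=
  Finset.univ.filter (fun a => ∃ b, bundleUtil u π a a < bundleUtil u π a b)

lemma bundleUtil_swap {n m : ℕ} (u : Fin n → Fin m → ℚ) (π : Fin m → Fin n)
    (a j l k : Fin n) :
    bundleUtil u (fun o => Equiv.swap a j (π o)) l k
      = bundleUtil u π l (Equiv.swap a j k) := by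
  unfold bundleUtil
  congr 1
  ext o
  simp only [mem_filter, mem_univ, true_and]
  constructor
  · intro h; rw [← h, Equiv.swap_apply_self]
  · intro h; rw [h, Equiv.swap_apply_self]

lemma key_induction {n m : ℕ} (u : Fin n → Fin m → ℚ) :
    ∀ K : ℕ, ∀ π : Fin m → Fin n, Psat u π → (unsat u π).card ≤ K →
      ∃ π' : Fin m → Fin n, ∀ i j : Fin n,
        bundleUtil u π' i j ≤ bundleUtil u π' i i := by
  intro K
  induction K with
  | zero =>
    intro π _ hcard
    refine ⟨π, fun i j => ?_⟩
    by_contra hlt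
    push_neg at hlt
    have : i ∈ unsat u π := by
      simp only [unsat, mem_filter, mem_univ, true_and]
      exact ⟨j, hlt⟩
    have := card_pos.mpr ⟨i, this⟩
    omega
  | succ K ih =>
    intro π hP hcard
    by_cases hempty : unsat u π = ∅
    · refine ⟨π, fun i j => ?_⟩
      by_contra hlt
      push_neg at hlt
      have : i ∈ unsat u π := by
        simp only [unsat, mem_filter, mem_univ, true_and]
        exact ⟨j, hlt⟩
      simp [hempty] at this
    · -- pick an envious agent a
      obtain ⟨a, ha⟩ := Finset.nonempty_iff_ne_empty.mpr hempty
      have ha' : ∃ b, bundleUtil u π a a < bundleUtil u π a b := by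
        simpa [unsat] using ha
      obtain ⟨b₀, hb₀⟩ := ha'
      -- pick j holding a's favourite bundle
      obtain ⟨j, -, hTop⟩ := Finset.exists_max_image Finset.univ
        (fun x => bundleUtil u π a x) ⟨a, mem_univ a⟩
      have hTop : ∀ x : Fin n, bundleUtil u π a x ≤ bundleUtil u π a j :=
        fun x => hTop x (mem_univ x)
      have hEnvyAJ : bundleUtil u π a a < bundleUtil u π a j :=
        lt_of_lt_of_le hb₀ (hTop b₀)
      have hja : j ≠ a := by
        intro hje; rw [hje] at hEnvyAJ; exact lt_irrefl _ hEnvyAJ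
      set π' : Fin m → Fin n := fun o => Equiv.swap a j (π o) with hπ'
      have hBU : ∀ l k : Fin n,
          bundleUtil u π' l k = bundleUtil u π l (Equiv.swap a j k) :=
        fun l k => bundleUtil_swap u π a j l k
      have hsa : Equiv.swap a j a = j := Equiv.swap_apply_left a j
      have hsj : Equiv.swap a j j = a := Equiv.swap_apply_right a j
      -- invariant preserved
      have hP' : Psat u π' := by
        intro x y l hxy hlx
        rw [hBU, hBU] at hxy ⊢
        by_cases hxa : x = a
        · subst hxa
          rw [hsa] at hxy
          exact absurd hxy (not_lt.mpr (hTop _))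
        by_cases hxj : x = j
        · rw [hxj] at hxy hlx ⊢
          rw [hsj] at hxy ⊢
          set b := Equiv.swap a j y with hb
          have hba : b ≠ a := by
            intro hba; rw [hba] at hxy; exact lt_irrefl _ hxy
          have hjj : bundleUtil u π j j ≤ bundleUtil u π j a :=
            hP a j j hEnvyAJ hja
          have hbj : b ≠ j := by
            intro hbj
            rw [hbj] at hxy
            exact absurd hxy (not_lt.mpr hjj)
          have hEnvyJB : bundleUtil u π j j < bundleUtil u π j b :=
            lt_of_le_of_lt hjj hxy
          by_cases hla : l = a
          · rw [hla]
            by_contra hcon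
            push_neg at hcon
            have := hP a b j hcon hja
            exact absurd hxy (not_lt.mpr this)
          · calc bundleUtil u π l b ≤ bundleUtil u π l j := hP j b l hEnvyJB hlx
              _ ≤ bundleUtil u π l a := hP a j l hEnvyAJ hla
        · have hx : Equiv.swap a j x = x := Equiv.swap_apply_of_ne_of_ne hxa hxj
          rw [hx] at hxy ⊢
          exact hP x (Equiv.swap a j y) l hxy hlx
      -- unsat strictly decreases
      have hnotin : a ∉ unsat u π' := by
        simp only [unsat, mem_filter, mem_univ, true_and, not_exists, not_lt]
        intro x
        rw [hBU, hBU, hsa]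
        exact hTop _
      have hsub : unsat u π' ⊆ unsat u π := by
        intro k hk
        by_contra hkn
        simp only [unsat, mem_filter, mem_univ, true_and, not_exists, not_lt] at hkn hk
        obtain ⟨y, hy⟩ := hk
        rw [hBU, hBU] at hy
        by_cases hka : k = a
        · rw [hka, hsa] at hy
          exact absurd hy (not_lt.mpr (hTop _))
        by_cases hkj : k = j
        · rw [hkj] at hkn
          rw [hkj, hsj] at hy
          have hjj : bundleUtil u π j j ≤ bundleUtil u π j a :=
            hP a j j hEnvyAJ hja
          exact absurd hy (not_lt.mpr (le_trans (hkn _) hjj))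
        · have hk' : Equiv.swap a j k = k := Equiv.swap_apply_of_ne_of_ne hka hkj
          rw [hk'] at hy
          exact absurd hy (not_lt.mpr (hkn _))
      have hssub : unsat u π' ⊂ unsat u π :=
        ⟨hsub, fun hsup => hnotin (hsup ha)⟩
      have hlt := Finset.card_lt_card hssub
      exact ih π' hP' (by omega)

theorem two_app_free_implies_envy_free {n m : ℕ} (u : Fin n → Fin m → ℚ)
    (h : ∃ π : Fin m → Fin n, KAppEnvyFree u π 2) :
    ∃ π : Fin m → Fin n, ∀ i j : Fin n,
      bundleUtil u π i j ≤ bundleUtil u π i i := by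
  obtain ⟨π, hK⟩ := h
  have hP : Psat u π := by
    intro a b l hab hla
    by_contra hcon
    push_neg at hcon
    have hne : a ≠ b := by
      intro hae; rw [hae] at hab; exact lt_irrefl _ hab
    refine hK a b hne ⟨{a, l}, ?_, ?_, ?_⟩
    · rw [Finset.card_insert_of_notMem (by simpa using (Ne.symm hla)),
        Finset.card_singleton]
    · exact Finset.mem_insert_self a _
    · intro k hk
      rcases Finset.mem_insert.mp hk with hka | hkl
      · subst hka; exact hab
      · rw [Finset.mem_singleton.mp hkl]; exact hcon
  exact key_induction u ((unsat u π).card) π hP le_rfl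
end

section
/- In an add-MARA instance with exactly 2 agents, if no envy-free allocation exists, then the instance is a unanimous envy instance, i.e., no (K-app envy)-free allocation exists for any K. -/
open Finset

theorem two_agents_ef_or_unanimous {m : ℕ} (u : Fin 2 → Fin m → ℚ)
    (hnoEF : ¬ ∃ π : Fin m → Fin 2, ∀ i j : Fin 2,
      bundleUtil u π i j ≤ bundleUtil u π i i) :
    ∀ K : ℕ, 1 ≤ K → K ≤ 2 →
      ¬ ∃ π : Fin m → Fin 2, KAppEnvyFree u π K := by
  have swapUtil : ∀ (π : Fin m → Fin 2) (e : Equiv.Perm (Fin 2)) (a k : Fin 2),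
      bundleUtil u (fun o => e (π o)) a k = bundleUtil u π a (e.symm k) := by
    intro π e a k
    unfold bundleUtil
    congr 1
    ext o
    simp only [Finset.mem_filter, Finset.mem_univ, true_and]
    rw [Equiv.apply_eq_iff_eq_symm_apply]
  intro K hK1 hK2
  rintro ⟨π, hπ⟩
  apply hnoEF
  interval_cases K
  · -- K = 1
    refine ⟨π, ?_⟩
    intro i j
    by_contra h
    push_neg at h
    rcases eq_or_ne i j with rfl | hij
    · exact absurd h (lt_irrefl _)
    · exact hπ i j hij ⟨{i}, Finset.card_singleton i, Finset.mem_singleton_self i,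
        by intro k hk; rw [Finset.mem_singleton] at hk; subst hk; exact h⟩
  · -- K = 2
    by_cases hEF : ∀ i j, bundleUtil u π i j ≤ bundleUtil u π i i
    · exact ⟨π, hEF⟩
    push_neg at hEF
    obtain ⟨i, j, hij⟩ := hEF
    have hne : i ≠ j := by rintro rfl; exact absurd hij (lt_irrefl _)
    have hcases : ∀ k : Fin 2, k = i ∨ k = j := by
      have : ∀ i j : Fin 2, i ≠ j → ∀ k : Fin 2, k = i ∨ k = j := by decide
      exact this i j hne
    have hj : bundleUtil u π j j ≤ bundleUtil u π j i := by
      by_contra h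
      push_neg at h
      refine hπ i j hne ⟨Finset.univ, by simp, Finset.mem_univ i, ?_⟩
      intro k _
      rcases hcases k with rfl | rfl
      · exact hij
      · exact h
    refine ⟨fun o => Equiv.swap i j (π o), ?_⟩
    intro a b
    rw [swapUtil, swapUtil]
    have hsymm : (Equiv.swap i j).symm = Equiv.swap i j := Equiv.symm_swap i j
    rw [hsymm]
    rcases hcases a with rfl | rfl
    · rw [Equiv.swap_apply_left]
      rcases hcases ((Equiv.swap a j) b) with h | h
      · rw [h]; exact hij.le
      · rw [h]
    · rw [Equiv.swap_apply_right]
      rcases hcases ((Equiv.swap i a) b) with h | h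
      · rw [h]
      · rw [h]; exact hj
end

section
/- In a House Allocation instance (n agents, n objects, each agent receives exactly one object), the instance is a unanimous envy instance if and only if there exists a pair of objects (o_a, o_b) such that every agent strictly prefers o_a to o_b, i.e., u(i,a) > u(i,b) for all agents a_i. -/
open Finset

/-- In a House Allocation instance (allocation = bijection `σ` from agents to
objects), agent `i` `K`-app envies agent `j`: there is a set of `K` agents
including `i`, each of whom strictly prefers `j`'s object to `i`'s object. -/
def HKAppEnvies {n : ℕ} (u : Fin n → Fin n → ℚ) (σ : Equiv.Perm (Fin n))
    (K : ℕ) (i j : Fin n) : Prop :=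
  ∃ S : Finset (Fin n), S.card = K ∧ i ∈ S ∧ ∀ k ∈ S, u k (σ i) < u k (σ j)

/-- A house allocation is (`K`-app envy)-free if no agent `K`-app envies another. -/
def HKAppEnvyFree {n : ℕ} (u : Fin n → Fin n → ℚ) (σ : Equiv.Perm (Fin n))
    (K : ℕ) : Prop :=
  ∀ i j : Fin n, i ≠ j → ¬ HKAppEnvies u σ K i j

theorem hap_unanimous_iff_dominated_pair {n : ℕ} (u : Fin n → Fin n → ℚ) :
    (∀ σ : Equiv.Perm (Fin n), ∃ i j : Fin n, i ≠ j ∧ HKAppEnvies u σ n i j) ↔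
      ∃ a b : Fin n, a ≠ b ∧ ∀ i : Fin n, u i b < u i a := by
  constructor
  · intro h
    obtain ⟨i, j, hij, S, hS, hiS, hlt⟩ := h 1
    have hSu : S = Finset.univ := Finset.eq_univ_of_card S (by simp [hS])
    refine ⟨j, i, hij.symm, fun k => ?_⟩
    simpa using hlt k (by simp [hSu])
  · rintro ⟨a, b, hab, h⟩ σ
    refine ⟨σ.symm b, σ.symm a, fun hc => hab (σ.symm.injective hc).symm,
      Finset.univ, by simp, Finset.mem_univ _, fun k _ => ?_⟩
    simpa using h k
end

section
/- There exists an add-MARA instance and a (K-app envy)-free allocation π (for some 3 ≤ K ≤ n−1) such that after performing an improving bundle swap between two agents (each strictly prefers the other's bundle), the resulting allocation π' is only (K'-app envy)-free for some K' > K and is not (K-app envy)-free. That is, improving swaps can strictly increase the minimal approval-envy level. -/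
open Finset

theorem improving_swap_can_increase_kapp_level :
    ∃ (n m : ℕ) (u : Fin n → Fin m → ℚ) (π : Fin m → Fin n)
      (i j : Fin n) (K K' : ℕ),
      i ≠ j ∧ 3 ≤ K ∧ K ≤ n - 1 ∧ K < K' ∧
      (∀ a b, 0 ≤ u a b) ∧
      KAppEnvyFree u π K ∧
      bundleUtil u π i i < bundleUtil u π i j ∧
      bundleUtil u π j j < bundleUtil u π j i ∧
      ¬ KAppEnvyFree u (fun o => Equiv.swap i j (π o)) K ∧
      KAppEnvyFree u (fun o => Equiv.swap i j (π o)) K' := by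
  classical
  set v : Fin 4 → Fin 4 → ℕ := ![![1,2,3,0], ![2,1,0,0], ![3,0,2,0], ![0,1,2,2]] with hv
  refine ⟨4, 4, fun a b => (v a b : ℚ), id, 0, 1, 3, 5, ?_, ?_, ?_, ?_, ?_, ?_, ?_, ?_, ?_, ?_⟩
  · decide
  · decide
  · decide
  · decide
  · intro a b; positivity
  · have h1 : ∀ i k : Fin 4, bundleUtil (fun a b => ((v a b : ℚ))) id i k = v i k := by
      intro i k
      simp [bundleUtil, Finset.filter_eq', Finset.sum_filter, Fin.sum_univ_four]
    simp only [KAppEnvyFree, KAppEnvies, h1, Nat.cast_lt]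
    decide
  · have h1 : ∀ i k : Fin 4, bundleUtil (fun a b => ((v a b : ℚ))) id i k = v i k := by
      intro i k
      simp [bundleUtil, Finset.filter_eq', Finset.sum_filter, Fin.sum_univ_four]
    rw [h1, h1]
    exact_mod_cast (by decide : (v 0 0 : ℕ) < v 0 1)
  · have h1 : ∀ i k : Fin 4, bundleUtil (fun a b => ((v a b : ℚ))) id i k = v i k := by
      intro i k
      simp [bundleUtil, Finset.filter_eq', Finset.sum_filter, Fin.sum_univ_four]
    rw [h1, h1]
    exact_mod_cast (by decide : (v 1 1 : ℕ) < v 1 0)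
  · have h2 : ∀ i k : Fin 4,
        bundleUtil (fun a b => ((v a b : ℚ))) (fun o => Equiv.swap 0 1 (id o)) i k
          = v i (Equiv.swap 0 1 k) := by
      intro i k
      simp [bundleUtil, Finset.sum_filter, Fin.sum_univ_four]
      fin_cases k <;> simp [Equiv.swap_apply_def]
    simp only [KAppEnvyFree, KAppEnvies, h2, Nat.cast_lt]
    decide
  · have h2 : ∀ i k : Fin 4,
        bundleUtil (fun a b => ((v a b : ℚ))) (fun o => Equiv.swap 0 1 (id o)) i k
          = v i (Equiv.swap 0 1 k) := by
      intro i k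
      simp [bundleUtil, Finset.sum_filter, Fin.sum_univ_four]
      fin_cases k <;> simp [Equiv.swap_apply_def]
    simp only [KAppEnvyFree, KAppEnvies, h2, Nat.cast_lt]
    decide
end
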